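/- For every word a ∈ W_P and every n ≥ 0, the value [a]_{n+1} equals either [a]_n or [a]_n + 2^n. Consequently, if [a]_n ≠ 0, then [a]_{n+1} ≠ 0. -/

import Mathlib

/-- Words built from a single generator `1` using two binary operations `·` and `∘`. -/
inductive WP : Type
  | one : WP
  | mul : WP → WP → WP
  | comp : WP → WP → WP

/-- Laver's laws (ALΣ) for two binary operations `mul` (`·`) and `comp` (`∘`). -/
def ALSigma {α : Type*} (mul comp : α → α → α) : Prop :=
  (∀ a b c : α, comp a (comp b c) = comp (comp a b) c) ∧
  (∀ a b c : α, mul (comp a b) c = mul a (mul b c)) ∧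
  (∀ a b c : α, mul a (comp b c) = comp (mul a b) (mul a c)) ∧
  (∀ a b : α, comp a b = comp (mul a b) a)

/-- `[a]_n`: the evaluation of a word `a ∈ W_P` in `P_n = ℤ/2^nℤ`, interpreting
the generator as `1`, `·` as `*_n` (`op n`) and `∘` as `∘_n` (`cmp n`). -/
def evalP (op cmp : ∀ n : ℕ, ZMod (2 ^ n) → ZMod (2 ^ n) → ZMod (2 ^ n))
    (n : ℕ) : WP → ZMod (2 ^ n)
  | WP.one => 1
  | WP.mul a b => op n (evalP op cmp n a) (evalP op cmp n b)
  | WP.comp a b => cmp n (evalP op cmp n a) (evalP op cmp n b)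


namespace S16

variable {m : ℕ}

instance iNZ (m : ℕ) : NeZero (2^m) := ⟨pow_ne_zero m two_ne_zero⟩

/-- position of x in the cycle 1,2,...,2^m (0 ↦ 2^m). -/
def v (x : ZMod (2^m)) : ℕ := if x = 0 then 2^m else x.val

lemma v_le (x : ZMod (2^m)) : v x ≤ 2^m := by
  unfold v; split
  · exact le_refl _
  · exact le_of_lt (ZMod.val_lt x)

lemma v_pos (x : ZMod (2^m)) : 0 < v x := by
  unfold v; split
  · exact Nat.pow_pos (n := m) (by norm_num)
  · rename_i h
    have : x.val ≠ 0 := fun h0 => h ((ZMod.val_eq_zero x).mp h0)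
    omega

lemma v_eq_top_iff (x : ZMod (2^m)) : v x = 2^m ↔ x = 0 := by
  unfold v; split
  · simp_all
  · rename_i h
    simp only [h, iff_false]
    exact Nat.ne_of_lt (ZMod.val_lt x)

lemma v_zero : v (0 : ZMod (2^m)) = 2^m := if_pos rfl

lemma two_lt (x : ZMod (2^m)) (hx : x ≠ 0) : 1 < 2^m := by
  rcases Nat.lt_or_ge 1 (2^m) with h | h
  · exact h
  · exfalso
    have h1 : (2:ℕ)^m = 1 := le_antisymm h Nat.one_le_two_pow
    have : Subsingleton (ZMod (2^m)) := by rw [h1]; infer_instance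
    exact hx (Subsingleton.elim x 0)

lemma val_one' (x : ZMod (2^m)) (hx : x ≠ 0) : (1 : ZMod (2^m)).val = 1 := by
  haveI : Fact (1 < 2^m) := ⟨two_lt x hx⟩
  exact ZMod.val_one _

lemma v_add_one (x : ZMod (2^m)) (hx : x ≠ 0) : v (x + 1) = v x + 1 := by
  have hxv : v x = x.val := if_neg hx
  have hlt : x.val < 2^m := ZMod.val_lt x
  have hv1 : (x + 1).val = (x.val + 1) % 2^m := by
    rw [ZMod.val_add, val_one' x hx]
  by_cases h1 : x + 1 = 0
  · have hval : (x+1).val = 0 := (ZMod.val_eq_zero _).mpr h1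
    rw [hv1] at hval
    have hx1 : x.val + 1 = 2^m := by
      rcases Nat.dvd_iff_mod_eq_zero.mpr hval with ⟨c, hc⟩
      have hc1 : c = 1 := by nlinarith [Nat.one_le_two_pow (n := m)]
      rw [hc1, mul_one] at hc
      omega
    unfold v
    rw [if_pos h1, if_neg hx]
    omega
  · have hvne : (x+1).val ≠ 0 := fun h => h1 ((ZMod.val_eq_zero _).mp h)
    unfold v
    rw [if_neg h1, if_neg hx, hv1]
    rw [hv1] at hvne
    have := Nat.mod_lt (x.val + 1) (show 0 < 2^m from Nat.pow_pos (n := m) (by norm_num))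
    rcases Nat.lt_or_ge (x.val + 1) (2^m) with h | h
    · exact Nat.mod_eq_of_lt h
    · exfalso; have : x.val + 1 = 2^m := by omega
      rw [this] at hvne; simp at hvne

/-- every element is 1 + k for a natural k -/
lemma cycle (b : ZMod (2^m)) : ∃ k : ℕ, b = 1 + (k : ZMod (2^m)) := by
  refine ⟨(b - 1).val, ?_⟩
  rw [ZMod.natCast_rightInverse (b - 1)]
  ring


section Struct

variable (mul cmp : ZMod (2^m) → ZMod (2^m) → ZMod (2^m))
variable (hl : ALSigma mul cmp) (hs : ∀ a, mul a 1 = a + 1)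

include hl hs in
lemma l1 (a b : ZMod (2^m)) : mul a (b + 1) = cmp a b + 1 := by
  have h := hl.2.1 a b 1
  rw [hs, hs] at h
  exact h.symm

include hl hs in
lemma l2 (a : ZMod (2^m)) : cmp a 0 = a := by
  have h := l1 mul cmp hl hs a 0
  rw [zero_add, hs] at h
  exact (add_right_cancel h).symm

include hl hs in
lemma cmp_zero_eq_mul (b : ZMod (2^m)) : cmp 0 b = mul 0 b := by
  rw [hl.2.2.2 0 b, l2 mul cmp hl hs]

include hl hs in
lemma zero_row_mul : ∀ b : ZMod (2^m), mul 0 b = b := by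
  have key : ∀ k : ℕ, mul 0 (1 + (k : ZMod (2^m))) = 1 + (k : ZMod (2^m)) := by
    intro k
    induction k with
    | zero => simpa using hs 0
    | succ k ih =>
      have hcast : (1 : ZMod (2^m)) + ((k+1 : ℕ) : ZMod (2^m)) = (1 + (k:ℕ)) + 1 := by
        push_cast; ring
      rw [hcast, l1 mul cmp hl hs, cmp_zero_eq_mul mul cmp hl hs, ih]
  intro b
  obtain ⟨k, rfl⟩ := cycle b
  exact key k

include hl hs in
lemma zero_row_cmp (b : ZMod (2^m)) : cmp 0 b = b := by
  rw [cmp_zero_eq_mul mul cmp hl hs, zero_row_mul mul cmp hl hs]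

include hl hs in
lemma inv_aux : ∀ (t : ℕ) (a : ZMod (2^m)), 2^m - v a ≤ t → a ≠ 0 →
    ∀ b, v a < v (mul a b) ∧ v a ≤ v (cmp a b) ∧ cmp a b ≠ 0 := by
  intro t
  induction t with
  | zero =>
    intro a ha hane
    exfalso
    have h1 : v a = 2^m := le_antisymm (v_le a) (by omega)
    exact hane ((v_eq_top_iff a).mp h1)
  | succ t ih =>
    intro a ha hane
    have hcmp : ∀ b, v a < v (mul a b) → v a ≤ v (cmp a b) ∧ cmp a b ≠ 0 := by
      intro b hb
      rw [hl.2.2.2 a b]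
      by_cases h0 : mul a b = 0
      · rw [h0, zero_row_cmp mul cmp hl hs]
        exact ⟨le_refl _, hane⟩
      · have hbnd : 2^m - v (mul a b) ≤ t := by
          have := v_le (mul a b); omega
        have h := ih (mul a b) hbnd h0 a
        exact ⟨le_of_lt (lt_of_lt_of_le hb h.2.1), h.2.2⟩
    have key : ∀ k : ℕ, v a < v (mul a (1 + (k : ZMod (2^m)))) := by
      intro k
      induction k with
      | zero =>
        simp only [Nat.cast_zero, add_zero]
        rw [hs, v_add_one a hane]
        omega
      | succ k ih2 =>
        have hc := hcmp _ ih2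
        have hcast : (1 : ZMod (2^m)) + ((k+1 : ℕ) : ZMod (2^m)) = (1 + (k:ℕ)) + 1 := by
          push_cast; ring
        rw [hcast, l1 mul cmp hl hs, v_add_one _ hc.2]
        omega
    intro b
    obtain ⟨k, rfl⟩ := cycle b
    exact ⟨key k, hcmp _ (key k)⟩

include hl hs in
lemma inv (a : ZMod (2^m)) (hane : a ≠ 0) (b : ZMod (2^m)) :
    v a < v (mul a b) ∧ v a ≤ v (cmp a b) ∧ cmp a b ≠ 0 :=
  inv_aux mul cmp hl hs (2^m) a (Nat.sub_le _ _) hane b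

end Struct

section Uniq

variable (mul1 cmp1 mul2 cmp2 : ZMod (2^m) → ZMod (2^m) → ZMod (2^m))
variable (hl1 : ALSigma mul1 cmp1) (hs1 : ∀ a, mul1 a 1 = a + 1)
variable (hl2 : ALSigma mul2 cmp2) (hs2 : ∀ a, mul2 a 1 = a + 1)

include hl1 hs1 hl2 hs2 in
lemma uniq_aux : ∀ (t : ℕ) (a : ZMod (2^m)), 2^m - v a ≤ t →
    ∀ b, mul1 a b = mul2 a b ∧ cmp1 a b = cmp2 a b := by
  intro t
  induction t with
  | zero =>
    intro a ha b
    have h1 : v a = 2^m := le_antisymm (v_le a) (by omega)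
    have h0 : a = 0 := (v_eq_top_iff a).mp h1
    subst h0
    rw [zero_row_mul mul1 cmp1 hl1 hs1, zero_row_mul mul2 cmp2 hl2 hs2,
      zero_row_cmp mul1 cmp1 hl1 hs1, zero_row_cmp mul2 cmp2 hl2 hs2]
    exact ⟨rfl, rfl⟩
  | succ t ih =>
    intro a ha
    by_cases hane : a = 0
    · subst hane
      intro b
      rw [zero_row_mul mul1 cmp1 hl1 hs1, zero_row_mul mul2 cmp2 hl2 hs2,
        zero_row_cmp mul1 cmp1 hl1 hs1, zero_row_cmp mul2 cmp2 hl2 hs2]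
      exact ⟨rfl, rfl⟩
    · have hcmp : ∀ b, mul1 a b = mul2 a b → cmp1 a b = cmp2 a b := by
        intro b hb
        rw [hl1.2.2.2 a b, hl2.2.2.2 a b, ← hb]
        by_cases h0 : mul1 a b = 0
        · rw [h0, zero_row_cmp mul1 cmp1 hl1 hs1, zero_row_cmp mul2 cmp2 hl2 hs2]
        · have hv := (inv mul1 cmp1 hl1 hs1 a hane b).1
          have hbnd : 2^m - v (mul1 a b) ≤ t := by
            have := v_le (mul1 a b); omega
          exact (ih (mul1 a b) hbnd a).2
      have key : ∀ k : ℕ, mul1 a (1 + (k : ZMod (2^m))) = mul2 a (1 + (k : ZMod (2^m))) := by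
        intro k
        induction k with
        | zero => simp only [Nat.cast_zero, add_zero]; rw [hs1, hs2]
        | succ k ih2 =>
          have hcast : (1 : ZMod (2^m)) + ((k+1 : ℕ) : ZMod (2^m)) = (1 + (k:ℕ)) + 1 := by
            push_cast; ring
          rw [hcast, l1 mul1 cmp1 hl1 hs1, l1 mul2 cmp2 hl2 hs2, hcmp _ ih2]
      intro b
      obtain ⟨k, rfl⟩ := cycle b
      exact ⟨key k, hcmp _ (key k)⟩

include hl1 hs1 hl2 hs2 in
lemma uniq (a b : ZMod (2^m)) : mul1 a b = mul2 a b ∧ cmp1 a b = cmp2 a b :=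
  uniq_aux mul1 cmp1 mul2 cmp2 hl1 hs1 hl2 hs2 (2^m) a (Nat.sub_le _ _) b

end Uniq

section Per

variable {α : Type*}

def Period (b : ℕ → α) (p : ℕ) : Prop := ∀ i, b (i + p) = b i

lemma per_sub {b : ℕ → α} {p q : ℕ} (hp : Period b p) (hq : Period b q) (h : q ≤ p) :
    Period b (p - q) := by
  intro i
  have h1 := hq (i + (p - q))
  rw [show i + (p - q) + q = i + p by omega] at h1
  rw [← h1, hp i]

lemma per_mod {b : ℕ → α} : ∀ p, ∀ q, Period b p → Period b q → Period b (p % q) := by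
  intro p
  induction p using Nat.strong_induction_on with
  | _ p ih =>
    intro q hp hq
    rcases Nat.eq_zero_or_pos q with hq0 | hq0
    · subst hq0; simpa using hp
    rcases Nat.lt_or_ge p q with h | h
    · rwa [Nat.mod_eq_of_lt h]
    · rw [Nat.mod_eq_sub_mod h]
      exact ih (p - q) (by omega) q (per_sub hp hq h) hq

lemma per_gcd {b : ℕ → α} : ∀ p q, Period b p → Period b q → Period b (Nat.gcd p q) := by
  intro p
  induction p using Nat.strong_induction_on with
  | _ p ih =>
    intro q hp hq
    rcases Nat.eq_zero_or_pos p with h0 | h0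
    · subst h0; simpa [Nat.gcd_zero_left] using hq
    · rw [Nat.gcd_rec]
      exact ih (q % p) (Nat.mod_lt q h0) p (per_mod q p hq hp) hp

lemma per_mul {b : ℕ → α} {p : ℕ} (hp : Period b p) (k : ℕ) : Period b (k * p) := by
  induction k with
  | zero => intro i; simp
  | succ k ih =>
    intro i
    rw [show i + (k+1) * p = (i + k * p) + p by ring, hp, ih]

lemma per_shrink {n : ℕ} (b : ℕ → ZMod (2^n))
    (hdet : ∀ j j', b j = b j' → b (j+1) = b (j'+1))
    (hper : Period b (2^(n+1))) : Period b (2^n) := by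
  -- pigeonhole
  obtain ⟨i, j, hij, hbij⟩ : ∃ i j : Fin (2^n + 1), i ≠ j ∧ b i = b j := by
    have hcard : Fintype.card (ZMod (2^n)) < Fintype.card (Fin (2^n + 1)) := by
      rw [ZMod.card, Fintype.card_fin]; omega
    obtain ⟨i, j, hij, h⟩ := Fintype.exists_ne_map_eq_of_card_lt (fun i : Fin (2^n+1) => b i) hcard
    exact ⟨i, j, hij, h⟩
  -- wlog s < t
  obtain ⟨s, t, hst, htle, hbst⟩ : ∃ s t : ℕ, s < t ∧ t ≤ 2^n ∧ b s = b t := by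
    have hi := i.isLt
    have hj := j.isLt
    rcases Nat.lt_or_ge (i : ℕ) (j : ℕ) with h | h
    · exact ⟨i, j, h, by omega, hbij⟩
    · have hlt : (j : ℕ) < i := by
        rcases Nat.lt_or_ge (j : ℕ) i with h' | h'
        · exact h'
        · exact absurd (Fin.ext (by omega : (i:ℕ) = j)) hij
      exact ⟨j, i, hlt, by omega, hbij.symm⟩
  have hshift : ∀ i, b (t + i) = b (s + i) := by
    intro i
    induction i with
    | zero => simpa using hbst.symm
    | succ i ih =>
      have := hdet _ _ ih
      rw [show t + i + 1 = t + (i+1) by ring, show s + i + 1 = s + (i+1) by ring] at this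
      exact this
  have hd : Period b (t - s) := by
    intro i
    have e1 : b (i + (t - s)) = b (i + (t - s) + 2^(n+1)) := (hper _).symm
    have e2 : i + (t - s) + 2^(n+1) = t + (i + 2^(n+1) - s) := by omega
    have e3 : s + (i + 2^(n+1) - s) = i + 2^(n+1) := by
      have : s ≤ 2^n := by omega
      have h2 : (2:ℕ)^n ≤ 2^(n+1) := Nat.pow_le_pow_right (by norm_num) (by omega)
      omega
    rw [e1, e2, hshift, e3, hper]
  set g := Nat.gcd (t - s) (2^(n+1)) with hg
  have hpg : Period b g := per_gcd _ _ hd hper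
  have hgdvd : g ∣ 2^(n+1) := Nat.gcd_dvd_right _ _
  have hgle : g ≤ 2^n := le_trans (Nat.gcd_le_left _ (by omega)) (by omega)
  obtain ⟨i, hi, hgi⟩ := (Nat.dvd_prime_pow Nat.prime_two).mp hgdvd
  have hin : i ≤ n := by
    by_contra hc
    have : 2^(n+1) ≤ 2^i := Nat.pow_le_pow_right (by norm_num) (by omega)
    have h2 : (2:ℕ)^n < 2^(n+1) := Nat.pow_lt_pow_right (by norm_num) (by omega)
    omega
  have hgdvd2 : g ∣ 2^n := hgi ▸ pow_dvd_pow 2 hin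
  have h2 : (2:ℕ)^n = (2^n / g) * g := (Nat.div_mul_cancel hgdvd2).symm
  have := per_mul hpg (2^n / g)
  rwa [← h2] at this

end Per

section Phi

variable {n : ℕ}

def phi (n : ℕ) : ZMod (2^(n+1)) →+* ZMod (2^n) :=
  ZMod.castHom (pow_dvd_pow 2 (Nat.le_succ n)) _

lemma phi_val (x : ZMod (2^(n+1))) : phi n x = ((x.val : ℕ) : ZMod (2^n)) := by
  unfold phi
  rw [ZMod.castHom_apply, ZMod.natCast_val]

lemma phi_T : phi n (((2^n : ℕ)) : ZMod (2^(n+1))) = 0 := by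
  rw [map_natCast, ZMod.natCast_self]

lemma phi_addT (x : ZMod (2^(n+1))) : phi n (x + ((2^n : ℕ) : ZMod (2^(n+1)))) = phi n x := by
  rw [map_add, phi_T, add_zero]

lemma TT_zero : ((2^n : ℕ) : ZMod (2^(n+1))) + ((2^n : ℕ) : ZMod (2^(n+1))) = 0 := by
  rw [← Nat.cast_add]
  have : (2:ℕ)^n + 2^n = 2^(n+1) := by rw [pow_succ]; ring
  rw [this, ZMod.natCast_self]

lemma val_split (x : ZMod (2^(n+1))) :
    x.val = x.val % 2^n ∨ x.val = x.val % 2^n + 2^n := by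
  have h1 : x.val < 2^(n+1) := ZMod.val_lt x
  have h2 : (2:ℕ)^(n+1) = 2^n + 2^n := by rw [pow_succ]; ring
  have hmul : (2:ℕ)^n * 2 = 2^(n+1) := (pow_succ 2 n).symm
  have hm : x.val % 2^n + 2^n * (x.val / 2^n) = x.val := Nat.mod_add_div x.val (2^n)
  have hq : x.val / 2^n < 2 := Nat.div_lt_of_lt_mul (by rw [hmul]; exact h1)
  obtain ⟨q, hqd⟩ : ∃ q, x.val / 2^n = q := ⟨_, rfl⟩
  obtain ⟨r, hrd⟩ : ∃ r, x.val % 2^n = r := ⟨_, rfl⟩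
  rw [hqd, hrd] at hm
  rw [hrd]
  have hq2 : q = 0 ∨ q = 1 := by omega
  rcases hq2 with h | h <;> rw [h] at hm
  · rw [mul_zero] at hm; left; omega
  · rw [mul_one] at hm; right; omega

lemma phi_cases {x y : ZMod (2^(n+1))} (h : phi n x = phi n y) :
    x = y ∨ x = y + ((2^n : ℕ) : ZMod (2^(n+1))) := by
  rw [phi_val, phi_val] at h
  have hmod : x.val % 2^n = y.val % 2^n := (ZMod.natCast_eq_natCast_iff _ _ _).mp h
  have hx := val_split x
  have hy := val_split y
  have hvals : x.val = y.val ∨ x.val = y.val + 2^n ∨ y.val = x.val + 2^n := by omega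
  have hxx : ((x.val : ℕ) : ZMod (2^(n+1))) = x := ZMod.natCast_rightInverse x
  have hyy : ((y.val : ℕ) : ZMod (2^(n+1))) = y := ZMod.natCast_rightInverse y
  rcases hvals with h1 | h1 | h1
  · left; rw [← hxx, ← hyy, h1]
  · right; rw [← hxx, h1, Nat.cast_add, hyy]
  · right
    have hyx : y = x + ((2^n : ℕ) : ZMod (2^(n+1))) := by
      rw [← hxx, ← hyy, h1, Nat.cast_add]
    rw [hyx, add_assoc, TT_zero, add_zero]

end Phi



section Cong

variable {n : ℕ}
variable (mul cmp : ZMod (2^(n+1)) → ZMod (2^(n+1)) → ZMod (2^(n+1)))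
variable (hl : ALSigma mul cmp) (hs : ∀ a, mul a 1 = a + 1)

include hl hs in
lemma cong_aux : ∀ (k : ℕ) (x y : ZMod (2^(n+1))), 2^(n+1) - v x ≤ k → v x ≤ v y →
    phi n x = phi n y → ∀ u w, phi n u = phi n w →
    phi n (mul x u) = phi n (mul y w) ∧ phi n (cmp x u) = phi n (cmp y w) := by
  intro k
  induction k with
  | zero =>
    intro x y hk hvxy hxy u w huw
    have hx0 : x = 0 := (v_eq_top_iff x).mp (le_antisymm (v_le x) (by omega))
    have hvx : v x = 2^(n+1) := (v_eq_top_iff x).mpr hx0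
    have hy0 : y = 0 := (v_eq_top_iff y).mp (le_antisymm (v_le y) (by omega))
    subst hx0; subst hy0
    rw [zero_row_mul mul cmp hl hs, zero_row_mul mul cmp hl hs,
        zero_row_cmp mul cmp hl hs, zero_row_cmp mul cmp hl hs]
    exact ⟨huw, huw⟩
  | succ k ih =>
    intro x y hk hvxy hxy u w huw
    by_cases hx0 : x = 0
    · have hvx : v x = 2^(n+1) := (v_eq_top_iff x).mpr hx0
      have hy0 : y = 0 := (v_eq_top_iff y).mp (le_antisymm (v_le y) (by omega))
      subst hx0; subst hy0
      rw [zero_row_mul mul cmp hl hs, zero_row_mul mul cmp hl hs,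
          zero_row_cmp mul cmp hl hs, zero_row_cmp mul cmp hl hs]
      exact ⟨huw, huw⟩
    · have hvx : v x < 2^(n+1) :=
        lt_of_le_of_ne (v_le x) (fun h => hx0 ((v_eq_top_iff x).mp h))
      have IHS : ∀ x' y', v x < v x' → v x < v y' → phi n x' = phi n y' →
          ∀ u' w', phi n u' = phi n w' →
          phi n (mul x' u') = phi n (mul y' w') ∧ phi n (cmp x' u') = phi n (cmp y' w') := by
        intro x' y' h1 h2 hxy' u' w' huw'
        rcases le_total (v x') (v y') with h | h
        · exact ih x' y' (by omega) h hxy' u' w' huw'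
        · have h3 := ih y' x' (by omega) h hxy'.symm w' u' huw'.symm
          exact ⟨h3.1.symm, h3.2.symm⟩
      have hy0x : y = 0 → phi n x = 0 := fun h => by rw [hxy, h, map_zero]
      have hstep : ∀ c d, phi n c = phi n d → phi n (mul x c) = phi n (mul y d) →
          phi n (cmp x c) = phi n (cmp y d) := by
        intro c d hcd hmm
        rw [hl.2.2.2 x c, hl.2.2.2 y d]
        have hA : v x < v (mul x c) := (inv mul cmp hl hs x hx0 c).1
        by_cases hy0 : y = 0
        · have hphix0 : phi n x = 0 := hy0x hy0
          rw [hy0, zero_row_mul mul cmp hl hs, l2 mul cmp hl hs]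
          have h2 := (IHS (mul x c) (mul x c) hA hA rfl x 0 (by rw [map_zero, hphix0])).2
          rw [l2 mul cmp hl hs] at h2
          rw [h2, hmm, hy0, zero_row_mul mul cmp hl hs]
        · have hB : v y < v (mul y d) := (inv mul cmp hl hs y hy0 d).1
          exact (IHS (mul x c) (mul y d) hA (lt_of_le_of_lt hvxy hB) hmm x y hxy).2
      have hpos : ∀ u', phi n (mul x u') = phi n (mul y u') := by
        have key : ∀ j : ℕ, phi n (mul x (1 + (j : ZMod (2^(n+1))))) =
            phi n (mul y (1 + (j : ZMod (2^(n+1))))) := by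
          intro j
          induction j with
          | zero =>
            simp only [Nat.cast_zero, add_zero]
            rw [hs, hs, map_add, map_add, hxy]
          | succ j ihj =>
            have hcast : (1 : ZMod (2^(n+1))) + ((j+1 : ℕ) : ZMod (2^(n+1)))
                = (1 + ((j : ℕ) : ZMod (2^(n+1)))) + 1 := by push_cast; ring
            rw [hcast, l1 mul cmp hl hs, l1 mul cmp hl hs, map_add, map_add,
              hstep _ _ rfl ihj]
        intro u'
        obtain ⟨j, rfl⟩ := cycle u'
        exact key j
      have hperx : ∀ u', phi n (mul x (u' + ((2^n : ℕ) : ZMod (2^(n+1))))) =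
          phi n (mul x u') := by
        set b : ℕ → ZMod (2^n) := fun j => phi n (mul x (1 + (j : ZMod (2^(n+1))))) with hb
        have hcastj : ∀ j : ℕ, (1 : ZMod (2^(n+1))) + ((j+1 : ℕ) : ZMod (2^(n+1)))
            = (1 + ((j : ℕ) : ZMod (2^(n+1)))) + 1 := by intro j; push_cast; ring
        have hdet : ∀ j j', b j = b j' → b (j+1) = b (j'+1) := by
          intro j j' hjj
          simp only [hb] at hjj ⊢
          have hAj : v x < v (mul x (1 + ((j : ℕ) : ZMod (2^(n+1))))) :=
            (inv mul cmp hl hs x hx0 _).1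
          have hAj' : v x < v (mul x (1 + ((j' : ℕ) : ZMod (2^(n+1))))) :=
            (inv mul cmp hl hs x hx0 _).1
          have hc := (IHS _ _ hAj hAj' hjj x x rfl).2
          rw [hcastj, hcastj, l1 mul cmp hl hs, l1 mul cmp hl hs,
            hl.2.2.2 x _, hl.2.2.2 x _, map_add, map_add, hc]
        have hper2 : Period b (2^(n+1)) := by
          intro i
          simp only [hb]
          have : ((i + 2^(n+1) : ℕ) : ZMod (2^(n+1))) = ((i : ℕ) : ZMod (2^(n+1))) := by
            rw [Nat.cast_add, ZMod.natCast_self, add_zero]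
          rw [this]
        have hpern : Period b (2^n) := per_shrink b hdet hper2
        intro u'
        obtain ⟨j, rfl⟩ := cycle u'
        have hpj := hpern j
        simp only [hb] at hpj
        have hcast2 : (1 : ZMod (2^(n+1))) + ((j + 2^n : ℕ) : ZMod (2^(n+1)))
            = (1 + ((j : ℕ) : ZMod (2^(n+1)))) + ((2^n : ℕ) : ZMod (2^(n+1))) := by
          push_cast; ring
        rw [hcast2] at hpj
        exact hpj
      have hmulpart : phi n (mul x u) = phi n (mul y w) := by
        rcases phi_cases huw with h | h
        · rw [h]; exact hpos w
        · rw [h]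
          calc phi n (mul x (w + ((2^n : ℕ) : ZMod (2^(n+1)))))
              = phi n (mul x w) := hperx w
            _ = phi n (mul y w) := hpos w
      exact ⟨hmulpart, hstep u w huw hmulpart⟩

include hl hs in
lemma cong (x y u w : ZMod (2^(n+1))) (hxy : phi n x = phi n y) (huw : phi n u = phi n w) :
    phi n (mul x u) = phi n (mul y w) ∧ phi n (cmp x u) = phi n (cmp y w) := by
  rcases le_total (v x) (v y) with h | h
  · exact cong_aux mul cmp hl hs (2^(n+1)) x y (Nat.sub_le _ _) h hxy u w huw
  · have h3 := cong_aux mul cmp hl hs (2^(n+1)) y x (Nat.sub_le _ _) h hxy.symm w u huw.symm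
    exact ⟨h3.1.symm, h3.2.symm⟩

end Cong

section Quot

variable {n : ℕ}
variable (mul cmp : ZMod (2^(n+1)) → ZMod (2^(n+1)) → ZMod (2^(n+1)))
variable (hl : ALSigma mul cmp) (hs : ∀ a, mul a 1 = a + 1)

def lift (a : ZMod (2^n)) : ZMod (2^(n+1)) := ((a.val : ℕ) : ZMod (2^(n+1)))

lemma phi_lift (a : ZMod (2^n)) : phi n (lift a) = a := by
  unfold lift; rw [map_natCast]; exact ZMod.natCast_rightInverse a

def Op (a b : ZMod (2^n)) : ZMod (2^n) := phi n (mul (lift a) (lift b))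

def Cmp (a b : ZMod (2^n)) : ZMod (2^n) := phi n (cmp (lift a) (lift b))

include hl hs in
lemma phi_mul (u w : ZMod (2^(n+1))) : phi n (mul u w) = Op mul (phi n u) (phi n w) :=
  (cong mul cmp hl hs u (lift (phi n u)) w (lift (phi n w))
    (phi_lift _).symm (phi_lift _).symm).1

include hl hs in
lemma phi_cmp (u w : ZMod (2^(n+1))) : phi n (cmp u w) = Cmp cmp (phi n u) (phi n w) :=
  (cong mul cmp hl hs u (lift (phi n u)) w (lift (phi n w))
    (phi_lift _).symm (phi_lift _).symm).2

include hl hs in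
lemma Op_laws : ALSigma (Op mul) (Cmp cmp) := by
  have hsurj : ∀ a : ZMod (2^n), ∃ u, phi n u = a := fun a => ⟨lift a, phi_lift a⟩
  refine ⟨?_, ?_, ?_, ?_⟩
  · intro a b c
    obtain ⟨ua, rfl⟩ := hsurj a; obtain ⟨ub, rfl⟩ := hsurj b; obtain ⟨uc, rfl⟩ := hsurj c
    simp only [← phi_cmp mul cmp hl hs, ← phi_mul mul cmp hl hs]
    exact congrArg _ (hl.1 ua ub uc)
  · intro a b c
    obtain ⟨ua, rfl⟩ := hsurj a; obtain ⟨ub, rfl⟩ := hsurj b; obtain ⟨uc, rfl⟩ := hsurj c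
    simp only [← phi_cmp mul cmp hl hs, ← phi_mul mul cmp hl hs]
    exact congrArg _ (hl.2.1 ua ub uc)
  · intro a b c
    obtain ⟨ua, rfl⟩ := hsurj a; obtain ⟨ub, rfl⟩ := hsurj b; obtain ⟨uc, rfl⟩ := hsurj c
    simp only [← phi_cmp mul cmp hl hs, ← phi_mul mul cmp hl hs]
    exact congrArg _ (hl.2.2.1 ua ub uc)
  · intro a b
    obtain ⟨ua, rfl⟩ := hsurj a; obtain ⟨ub, rfl⟩ := hsurj b
    simp only [← phi_cmp mul cmp hl hs, ← phi_mul mul cmp hl hs]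
    exact congrArg _ (hl.2.2.2 ua ub)

include hl hs in
lemma Op_succ : ∀ a : ZMod (2^n), Op mul a 1 = a + 1 := by
  intro a
  obtain ⟨u, rfl⟩ : ∃ u, phi n u = a := ⟨lift a, phi_lift a⟩
  rw [← map_one (phi n), ← phi_mul mul cmp hl hs, hs, map_add, map_one]

end Quot

end S16

theorem stmt_16 (op cmp : ∀ n : ℕ, ZMod (2 ^ n) → ZMod (2 ^ n) → ZMod (2 ^ n))
    (hlaws : ∀ n, ALSigma (op n) (cmp n))
    (hsucc : ∀ n, ∀ a : ZMod (2 ^ n), op n a 1 = a + 1)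
    (a : WP) (n : ℕ) :
    ((evalP op cmp (n + 1) a).val = (evalP op cmp n a).val ∨
      (evalP op cmp (n + 1) a).val = (evalP op cmp n a).val + 2 ^ n) ∧
    (evalP op cmp n a ≠ 0 → evalP op cmp (n + 1) a ≠ 0) := by
  have hl' := hlaws (n+1)
  have hs' := hsucc (n+1)
  have hOps : ∀ a b : ZMod (2^n), S16.Op (op (n+1)) a b = op n a b ∧
      S16.Cmp (cmp (n+1)) a b = cmp n a b :=
    S16.uniq (S16.Op (op (n+1))) (S16.Cmp (cmp (n+1))) (op n) (cmp n)
      (S16.Op_laws (op (n+1)) (cmp (n+1)) hl' hs')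
      (S16.Op_succ (op (n+1)) (cmp (n+1)) hl' hs')
      (hlaws n) (hsucc n)
  have hom_mul : ∀ u w : ZMod (2^(n+1)), S16.phi n (op (n+1) u w)
      = op n (S16.phi n u) (S16.phi n w) := by
    intro u w
    rw [S16.phi_mul (op (n+1)) (cmp (n+1)) hl' hs', (hOps _ _).1]
  have hom_cmp : ∀ u w : ZMod (2^(n+1)), S16.phi n (cmp (n+1) u w)
      = cmp n (S16.phi n u) (S16.phi n w) := by
    intro u w
    rw [S16.phi_cmp (op (n+1)) (cmp (n+1)) hl' hs', (hOps _ _).2]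
  have hword : ∀ a : WP, S16.phi n (evalP op cmp (n+1) a) = evalP op cmp n a := by
    intro a
    induction a with
    | one => exact map_one _
    | mul a b iha ihb => rw [evalP, evalP, hom_mul, iha, ihb]
    | comp a b iha ihb => rw [evalP, evalP, hom_cmp, iha, ihb]
  have hxy : S16.phi n (evalP op cmp (n+1) a) = evalP op cmp n a := hword a
  constructor
  · have hval : (evalP op cmp n a).val = (evalP op cmp (n+1) a).val % 2^n := by
      rw [← hxy, S16.phi_val, ZMod.val_natCast]
    have hsplit := S16.val_split (evalP op cmp (n+1) a)
    omega
  · intro hy hx0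
    apply hy
    rw [← hxy, hx0, map_zero]
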